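/- (Correctness of RAW for traffic volumes / weighted streams.) Let s ≥ 1 be a natural number dividing W and let x ∈ U. Suppose that for every ℓ ∈ {0, 1, …, W/s} a real number Â(ℓ) is given satisfying v_x^{ℓ·s} ≤ Â(ℓ) ≤ v_x^{ℓ·s} + s·M. Then for all indices i ≤ j ≤ W, the estimate v := Â(⌈j/s⌉) − Â(⌊i/s⌋) + s·M satisfies v_x^{i,j} ≤ v ≤ v_x^{i,j} + 4·s·M. (With s = Wε/4 the additive error is at most W·M·ε.) -/
import Mathlib


/-- The `w`-volume of `x`: the sum of the weights of the pairs with identifier `x`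
among the last `w` elements of the weighted stream `S`. -/
def vol {U : Type*} [DecidableEq U] (S : List (U × ℕ)) (x : U) (w : ℕ) : ℕ :=
  ((((S.drop (S.length - w)).filter (fun p => p.1 = x))).map Prod.snd).sum

lemma vol_decomp {U : Type*} [DecidableEq U] (S : List (U × ℕ)) (x : U)
    {w1 w2 : ℕ} (h : w1 ≤ w2) :
    vol S x w2 = ((((S.drop (S.length - w2)).take ((S.length - w1) - (S.length - w2))).filter
      (fun p => p.1 = x)).map Prod.snd).sum + vol S x w1 := by
  unfold vol
  set k := (S.length - w1) - (S.length - w2) with hk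
  have h1 : (S.drop (S.length - w2)).drop k = S.drop (S.length - w1) := by
    rw [List.drop_drop]
    congr 1
    omega
  conv_lhs => rw [← List.take_append_drop k (S.drop (S.length - w2))]
  rw [h1, List.filter_append, List.map_append, List.sum_append]

lemma vol_mono {U : Type*} [DecidableEq U] (S : List (U × ℕ)) (x : U)
    {w1 w2 : ℕ} (h : w1 ≤ w2) : vol S x w1 ≤ vol S x w2 := by
  rw [vol_decomp S x h]; omega

lemma vol_le_vol_add {U : Type*} [DecidableEq U] (S : List (U × ℕ)) (M : ℕ)
    (hw : ∀ p ∈ S, p.2 ≤ M) (x : U) {w1 w2 : ℕ} (h : w1 ≤ w2) :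
    vol S x w2 ≤ vol S x w1 + ((S.length - w1) - (S.length - w2)) * M := by
  rw [vol_decomp S x h]
  set k := (S.length - w1) - (S.length - w2)
  set L := ((S.drop (S.length - w2)).take k).filter (fun p => p.1 = x) with hL
  have hlen : (L.map Prod.snd).length ≤ k := by
    rw [List.length_map]
    exact (List.length_filter_le _ _).trans (List.length_take_le _ _)
  have hsum : (L.map Prod.snd).sum ≤ (L.map Prod.snd).length * M := by
    have : ∀ y ∈ L.map Prod.snd, y ≤ M := by
      intro y hy
      obtain ⟨p, hp, rfl⟩ := List.mem_map.1 hy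
      exact hw p (List.mem_of_mem_drop (List.mem_of_mem_take (List.mem_of_mem_filter hp)))
    calc (L.map Prod.snd).sum ≤ (L.map Prod.snd).length • M := List.sum_le_card_nsmul _ M this
      _ = (L.map Prod.snd).length * M := by simp [smul_eq_mul]
  have := hsum.trans (Nat.mul_le_mul_right M hlen)
  omega

theorem raw_volume_correctness {U : Type*} [DecidableEq U]
    (W M s : ℕ) (hs : 1 ≤ s) (hsW : s ∣ W) (S : List (U × ℕ)) (hS : S.length = W)
    (hw : ∀ p ∈ S, 1 ≤ p.2 ∧ p.2 ≤ M) (x : U)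
    (A : ℕ → ℝ)
    (hA : ∀ ℓ ≤ W / s, (vol S x (ℓ * s) : ℝ) ≤ A ℓ ∧ A ℓ ≤ vol S x (ℓ * s) + s * M)
    (i j : ℕ) (hij : i ≤ j) (hjW : j ≤ W) :
    ((vol S x j : ℝ) - vol S x i) ≤ A (j ⌈/⌉ s) - A (i / s) + s * M ∧
      A (j ⌈/⌉ s) - A (i / s) + s * M ≤ ((vol S x j : ℝ) - vol S x i) + 4 * (s * M) := by
  have hs0 : 0 < s := hs
  have hw' : ∀ p ∈ S, p.2 ≤ M := fun p hp => (hw p hp).2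
  set ℓj := j ⌈/⌉ s with hℓj
  set ℓi := i / s with hℓi
  have hWs : s * (W / s) = W := Nat.mul_div_cancel' hsW
  -- bounds on indices
  have hjle : j ≤ ℓj * s := by
    have := le_smul_ceilDiv (b := j) hs0
    simpa [smul_eq_mul, mul_comm] using this
  have hℓjle : ℓj * s ≤ j + s := by
    rw [hℓj, Nat.ceilDiv_eq_add_pred_div]
    have := Nat.div_mul_le_self (j + s - 1) s
    omega
  have hile : ℓi * s ≤ i := Nat.div_mul_le_self i s
  have hiub : i ≤ ℓi * s + s := by
    have h := Nat.mod_add_div' i s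
    have h2 := Nat.mod_lt i hs0
    rw [hℓi]
    omega
  have hℓjW : ℓj ≤ W / s := by
    rw [hℓj, ceilDiv_le_iff_le_mul hs0, hWs]; exact hjW
  have hℓiW : ℓi ≤ W / s := Nat.div_le_div_right (hij.trans hjW)
  have hℓjsW : ℓj * s ≤ W := by
    calc ℓj * s ≤ (W / s) * s := Nat.mul_le_mul_right s hℓjW
      _ = W := by rw [mul_comm]; exact hWs
  -- volume bounds
  obtain ⟨hAj1, hAj2⟩ := hA ℓj hℓjW
  obtain ⟨hAi1, hAi2⟩ := hA ℓi hℓiW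
  have h1 : vol S x j ≤ vol S x (ℓj * s) := vol_mono S x hjle
  have h2 : vol S x (ℓj * s) ≤ vol S x j + s * M := by
    have := vol_le_vol_add S M hw' x hjle
    have hk : (S.length - j) - (S.length - ℓj * s) ≤ s := by omega
    calc vol S x (ℓj * s) ≤ vol S x j + ((S.length - j) - (S.length - ℓj * s)) * M := this
      _ ≤ vol S x j + s * M := by nlinarith
  have h3 : vol S x (ℓi * s) ≤ vol S x i := vol_mono S x hile
  have h4 : vol S x i ≤ vol S x (ℓi * s) + s * M := by
    have := vol_le_vol_add S M hw' x hile
    have hk : (S.length - ℓi * s) - (S.length - i) ≤ s := by omega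
    calc vol S x i ≤ vol S x (ℓi * s) + ((S.length - ℓi * s) - (S.length - i)) * M := this
      _ ≤ vol S x (ℓi * s) + s * M := by nlinarith
  -- cast to ℝ
  have c1 : (vol S x j : ℝ) ≤ vol S x (ℓj * s) := by exact_mod_cast h1
  have c2 : (vol S x (ℓj * s) : ℝ) ≤ vol S x j + s * M := by exact_mod_cast h2
  have c3 : (vol S x (ℓi * s) : ℝ) ≤ vol S x i := by exact_mod_cast h3
  have c4 : (vol S x i : ℝ) ≤ vol S x (ℓi * s) + s * M := by exact_mod_cast h4
  constructor <;> linarith
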